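/- arXiv:math/0112034 — 2 statements merged into one kernel-verified Lean document; each statement's English description precedes it below -/
import Mathlib

section
/- For all planar binary trees x and y, one has x / y ≤ x \ y in the Tamari order on Y_{deg x + deg y}. -/
/-- A planar binary tree: a leaf `|` or a grafting `x ∨ y`. -/
inductive PBT : Type
  | leaf : PBT
  | node : PBT → PBT → PBT
  deriving DecidableEq

namespace PBT

/-- The degree: number of internal vertices. -/
def deg : PBT → ℕ
  | leaf => 0
  | node l r => deg l + deg r + 1

/-- The set `Y n` of planar binary trees of degree `n`. -/
def Y (n : ℕ) : Set PBT := {t | t.deg = n}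

/-- The `over` operation `x / y`. -/
def overOp : PBT → PBT → PBT
  | x, leaf => x
  | x, node yl yr => node (overOp x yl) yr

/-- The `under` operation `x \ y`. -/
def under : PBT → PBT → PBT
  | leaf, y => y
  | node xl xr, y => node xl (under xr y)

/-- The Tamari order, generated by `(x ∨ y) ∨ z ≤ x ∨ (y ∨ z)` and compatibility
with grafting on both sides. -/
inductive tle : PBT → PBT → Prop
  | refl (x : PBT) : tle x x
  | trans {x y z : PBT} : tle x y → tle y z → tle x z
  | rotate (x y z : PBT) : tle (node (node x y) z) (node x (node y z))
  | node_left {x y : PBT} (z : PBT) : tle x y → tle (node x z) (node y z)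
  | node_right {x y : PBT} (z : PBT) : tle x y → tle (node z x) (node z y)

/-- The sum of two planar binary trees: the Tamari interval `[x/y, x\y]`
(a subset of `Y (deg x + deg y)`). -/
def sum (x y : PBT) : Set PBT := {z | tle (overOp x y) z ∧ tle z (under x y)}

/-- A grove of degree `n`: a nonempty subset of `Y n`. -/
def Grove (n : ℕ) (A : Set PBT) : Prop := A.Nonempty ∧ ∀ x ∈ A, x.deg = n

/-- The sum of groves. -/
def gsum (A B : Set PBT) : Set PBT := ⋃ x ∈ A, ⋃ y ∈ B, sum x y

/-- The reflection involution σ. -/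
def σ : PBT → PBT
  | leaf => leaf
  | node l r => node (σ r) (σ l)

/-- The left sum `x ⊣ y` of trees (with the conventions `x ⊣ | = {x}`, `| ⊣ y = {|}`). -/
def lsum : PBT → PBT → Set PBT
  | x, leaf => {x}
  | leaf, _ => {leaf}
  | node xl xr, y => (fun z => node xl z) '' sum xr y

/-- The right sum `x ⊢ y` of trees (with the conventions `| ⊢ y = {y}`, `x ⊢ | = {|}`). -/
def rsum : PBT → PBT → Set PBT
  | leaf, y => {y}
  | _, leaf => {leaf}
  | x, node yl yr => (fun z => node z yr) '' sum x yl

/-- Left sum of groves. -/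
def glsum (A B : Set PBT) : Set PBT := ⋃ x ∈ A, ⋃ y ∈ B, lsum x y

/-- Right sum of groves. -/
def grsum (A B : Set PBT) : Set PBT := ⋃ x ∈ A, ⋃ y ∈ B, rsum x y

/-- Multiplication of a tree by a grove:
`| × B = {|}` and `(xˡ ∨ xʳ) × B = ((xˡ × B) ⊢ B) ⊣ (xʳ × B)`.
(The conventions `{|} ⊢ B = B` and `A ⊣ {|} = A` are built into `rsum`/`lsum`.) -/
def tmul : PBT → Set PBT → Set PBT
  | leaf, _ => {leaf}
  | node l r, B => glsum (grsum (tmul l B) B) (tmul r B)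

/-- Multiplication of groves. -/
def gmul (A B : Set PBT) : Set PBT := ⋃ x ∈ A, tmul x B

end PBT

theorem PBT.under_leaf (x : PBT) : x.under PBT.leaf = x := by
  induction x with
  | leaf => rfl
  | node l r ihl ihr => simp [PBT.under, ihr]

theorem PBT.node_under_le (x y z : PBT) :
    PBT.tle (PBT.node (x.under y) z) (x.under (PBT.node y z)) := by
  induction x generalizing y with
  | leaf => exact PBT.tle.refl _
  | node xl xr ihl ihr =>
    exact PBT.tle.trans (PBT.tle.rotate xl (xr.under y) z)
      (PBT.tle.node_right xl (ihr y))

/-- For all planar binary trees `x` and `y`, `x / y ≤ x \ y`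
in the Tamari order. -/
theorem over_le_under (x y : PBT) : PBT.tle (x.overOp y) (x.under y) := by
  induction y generalizing x with
  | leaf => rw [PBT.under_leaf]; exact PBT.tle.refl _
  | node yl yr ihl ihr =>
    exact PBT.tle.trans (PBT.tle.node_left yr (ihl x)) (PBT.node_under_le x yl yr)
end

section
/- For all n, m ≥ 0 and every planar binary tree z ∈ Y_{n+m}, there exist unique planar binary trees x ∈ Y_n and y ∈ Y_m such that x/y ≤ z ≤ x\y in the Tamari order. -/
namespace PBT

/-- Splitting a tree along its `i`-th leaf. -/
def split : PBT → ℕ → PBT × PBT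
  | leaf, _ => (leaf, leaf)
  | node l r, i =>
    if i ≤ l.deg then
      ((split l i).1, node (split l i).2 r)
    else
      (node l (split r (i - l.deg - 1)).1, (split r (i - l.deg - 1)).2)

theorem tle.deg_eq {a b : PBT} (h : tle a b) : a.deg = b.deg := by
  induction h with
  | refl => rfl
  | trans _ _ h1 h2 => omega
  | rotate x y z => simp [deg]; omega
  | node_left z _ ih => simp [deg]; omega
  | node_right z _ ih => simp [deg]; omega

/-- A weight strictly decreasing along rotations. -/
def w : PBT → ℕ
  | leaf => 0
  | node l r => w l + w r + l.deg

theorem tle.w_lt {a b : PBT} (h : tle a b) : a = b ∨ b.w < a.w := by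
  induction h with
  | refl => exact Or.inl rfl
  | trans h1 h2 ih1 ih2 =>
    rcases ih1 with rfl | h1' <;> rcases ih2 with rfl | h2'
    · exact Or.inl rfl
    · exact Or.inr h2'
    · exact Or.inr h1'
    · exact Or.inr (h2'.trans h1')
  | rotate x y z => right; simp [w, deg]; omega
  | node_left z h ih =>
    rcases ih with rfl | h'
    · exact Or.inl rfl
    · right; have := h.deg_eq; simp [w]; omega
  | node_right z h ih =>
    rcases ih with rfl | h'
    · exact Or.inl rfl
    · right; simp [w]; omega

theorem tle.antisymm {a b : PBT} (h1 : tle a b) (h2 : tle b a) : a = b := by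
  rcases h1.w_lt with rfl | h1' 
  · rfl
  · rcases h2.w_lt with rfl | h2'
    · rfl
    · omega

theorem split_deg {t : PBT} {i : ℕ} (hi : i ≤ t.deg) :
    (split t i).1.deg = i ∧ (split t i).2.deg = t.deg - i := by
  induction t generalizing i with
  | leaf => simp [deg] at hi; simp [split, hi, deg]
  | node l r ihl ihr =>
    by_cases h : i ≤ l.deg
    · have := ihl h
      simp [split, h, deg]; omega
    · have hd : i - l.deg - 1 ≤ r.deg := by simp [deg] at hi; omega
      have := ihr hd
      simp [split, h, deg]; omega

theorem split_last (t : PBT) : split t t.deg = (t, leaf) := by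
  induction t with
  | leaf => simp [split]
  | node l r ihl ihr =>
    have h : ¬ (l.deg + r.deg + 1 ≤ l.deg) := by omega
    have : l.deg + r.deg + 1 - l.deg - 1 = r.deg := by omega
    simp [split, deg, h, this, ihr]

theorem split_zero (t : PBT) : split t 0 = (leaf, t) := by
  induction t with
  | leaf => simp [split]
  | node l r ihl ihr => simp [split, ihl]

theorem deg_over (x y : PBT) : (overOp x y).deg = x.deg + y.deg := by
  induction y with
  | leaf => simp [overOp, deg]
  | node yl yr ihl ihr => simp [overOp, deg]; omega

theorem deg_under (x y : PBT) : (under x y).deg = x.deg + y.deg := by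
  induction x with
  | leaf => simp [under, deg]
  | node xl xr ihl ihr => simp [under, deg]; omega

theorem split_under (x y : PBT) : split (under x y) x.deg = (x, y) := by
  induction x with
  | leaf => simpa [under, deg] using split_zero y
  | node xl xr ihl ihr =>
    have h : ¬ (xl.deg + xr.deg + 1 ≤ xl.deg) := by omega
    have h2 : xl.deg + xr.deg + 1 - xl.deg - 1 = xr.deg := by omega
    simp [under, split, deg, h, h2, ihr]

end PBT

namespace PBT

theorem split_over (x y : PBT) : split (overOp x y) x.deg = (x, y) := by
  induction y with
  | leaf => simpa [overOp] using split_last x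
  | node yl yr ih _ =>
    have h : x.deg ≤ (overOp x yl).deg := by rw [deg_over]; omega
    simp [overOp, split, h, ih]

/-- `(x∨y)/z ≤ x∨(y/z)`. -/
theorem over_node_le (x y z : PBT) : tle (overOp (node x y) z) (node x (overOp y z)) := by
  induction z with
  | leaf => exact tle.refl _
  | node zl zr ihl _ =>
    exact tle.trans (tle.node_left _ ihl) (tle.rotate _ _ _)

/-- `(x\y)∨z ≤ x\(y∨z)`. -/
theorem le_under_node (x y z : PBT) : tle (node (under x y) z) (under x (node y z)) := by
  induction x with
  | leaf => exact tle.refl _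
  | node xl xr _ ihr =>
    exact tle.trans (tle.rotate _ _ _) (tle.node_right _ ihr)

theorem split_bounds (z : PBT) (i : ℕ) (hi : i ≤ z.deg) :
    tle (overOp (split z i).1 (split z i).2) z ∧ tle z (under (split z i).1 (split z i).2) := by
  induction z generalizing i with
  | leaf => simp [deg] at hi; subst hi; exact ⟨tle.refl _, tle.refl _⟩
  | node l r ihl ihr =>
    by_cases h : i ≤ l.deg
    · obtain ⟨h1, h2⟩ := ihl i h
      simp only [split, if_pos h]
      constructor
      · simpa [overOp] using tle.node_left r h1
      · exact tle.trans (tle.node_left r h2) (le_under_node _ _ _)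
    · have hd : i - l.deg - 1 ≤ r.deg := by simp [deg] at hi ⊢; omega
      obtain ⟨h1, h2⟩ := ihr _ hd
      simp only [split, if_neg h]
      constructor
      · exact tle.trans (over_node_le _ _ _) (tle.node_right l h1)
      · simpa [under] using tle.node_right l h2

theorem split_mono {a b : PBT} (h : tle a b) (i : ℕ) :
    tle (split a i).1 (split b i).1 ∧ tle (split a i).2 (split b i).2 := by
  induction h generalizing i with
  | refl => exact ⟨tle.refl _, tle.refl _⟩
  | trans h1 h2 ih1 ih2 =>
    exact ⟨(ih1 i).1.trans (ih2 i).1, (ih1 i).2.trans (ih2 i).2⟩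
  | rotate x y z =>
    by_cases h1 : i ≤ x.deg
    · have h2 : i ≤ x.deg + y.deg + 1 := by omega
      simp only [split, deg, if_pos h1, if_pos h2]
      exact ⟨tle.refl _, tle.rotate _ _ _⟩
    · by_cases h2 : i ≤ x.deg + y.deg + 1
      · have h3 : i - x.deg - 1 ≤ y.deg := by omega
        have h4 : i - (x.deg + y.deg + 1) - 1 = i - x.deg - 1 - y.deg - 1 := by omega
        simp only [split, deg, if_pos h2, if_neg h1, if_pos h3]
        exact ⟨tle.refl _, tle.refl _⟩
      · have h3 : ¬ (i - x.deg - 1 ≤ y.deg) := by omega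
        have h4 : i - (x.deg + y.deg + 1) - 1 = i - x.deg - 1 - y.deg - 1 := by omega
        simp only [split, deg, if_neg h1, if_neg h2, if_neg h3, h4]
        exact ⟨tle.rotate _ _ _, tle.refl _⟩
  | @node_left x y z h ih =>
    have hd : x.deg = y.deg := h.deg_eq
    by_cases h1 : i ≤ x.deg
    · simp only [split, if_pos h1, hd ▸ h1, if_pos (hd ▸ h1)]
      exact ⟨(ih i).1, tle.node_left _ (ih i).2⟩
    · have h2 : ¬ (i ≤ y.deg) := by omega
      simp only [split, if_neg h1, if_neg h2, hd]
      exact ⟨tle.node_left _ h, tle.refl _⟩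
  | @node_right x y z h ih =>
    by_cases h1 : i ≤ z.deg
    · simp only [split, if_pos h1]
      exact ⟨tle.refl _, tle.node_right _ h⟩
    · simp only [split, if_neg h1]
      exact ⟨tle.node_right _ (ih _).1, (ih _).2⟩

end PBT

open PBT in
/-- for every `z ∈ Y_{n+m}` there are unique `x ∈ Y_n`, `y ∈ Y_m`
with `x/y ≤ z ≤ x\y`. -/
theorem exists_unique_interval (n m : ℕ) (z : PBT) (hz : z ∈ Y (n + m)) :
    ∃! p : PBT × PBT, p.1 ∈ Y n ∧ p.2 ∈ Y m ∧
      tle (p.1.overOp p.2) z ∧ tle z (p.1.under p.2) := by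
  have hzd : z.deg = n + m := hz
  have hn : n ≤ z.deg := by omega
  obtain ⟨hd1, hd2⟩ := split_deg hn
  obtain ⟨hb1, hb2⟩ := split_bounds z n hn
  refine ⟨split z n, ⟨hd1, by simp only [Y, Set.mem_setOf_eq]; omega, hb1, hb2⟩, ?_⟩
  rintro ⟨x, y⟩ ⟨hx, hy, h1, h2⟩
  have hxd : x.deg = n := hx
  subst hxd
  have lo := split_mono h1 x.deg
  have hi := split_mono h2 x.deg
  rw [split_over] at lo
  rw [split_under] at hi
  have e1 : x = (split z x.deg).1 := tle.antisymm lo.1 hi.1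
  have e2 : y = (split z x.deg).2 := tle.antisymm lo.2 hi.2
  exact Prod.ext e1 e2
end
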